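/- Let f₀ : ℝ → ℝ be defined by f₀(x) = 2/(e^{πx} + e^{−πx}). Then f₀ is its own Fourier transform: for every ξ ∈ ℝ, ∫_ℝ f₀(x) e^{−2πiξx} dx = f₀(ξ). -/

import Mathlib

open MeasureTheory Real Set

lemma aux_cpow_exp (y : ℝ) (w : ℂ) :
    ((Real.exp y : ℝ) : ℂ) ^ w = Complex.exp ((y : ℂ) * w) := by
  rw [Complex.cpow_def_of_ne_zero (by exact_mod_cast (Real.exp_pos y).ne')]
  congr 1
  rw [Complex.ofReal_exp, Complex.log_exp (by simp [Real.pi_pos]) (by simp [Real.pi_pos.le])]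

/-- Substitution `t = x/(1-x)` turns the beta-type integral over `(0,1)` into the
Mellin-type integral over `(0,∞)`. -/
lemma aux_beta_to_mellin (s : ℂ) :
    ∫ t in Ioi (0:ℝ), (t : ℂ) ^ (s - 1) / (1 + (t : ℂ)) =
      ∫ x in Ioo (0:ℝ) 1, (x : ℂ) ^ (s - 1) * (1 - (x : ℂ)) ^ (-s) := by
  have himg : (fun x : ℝ => x / (1 - x)) '' Ioo (0:ℝ) 1 = Ioi (0:ℝ) := by
    ext t
    constructor
    · rintro ⟨x, ⟨hx0, hx1⟩, rfl⟩
      exact div_pos hx0 (by linarith)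
    · intro ht
      have ht' : (0:ℝ) < 1 + t := by simp at ht; linarith
      refine ⟨t / (1 + t), ⟨div_pos (by simpa using ht) ht',
        (div_lt_one ht').2 (by linarith)⟩, ?_⟩
      field_simp
      ring
  have hderiv : ∀ x ∈ Ioo (0:ℝ) 1,
      HasDerivWithinAt (fun x : ℝ => x / (1 - x)) (1 / (1 - x) ^ 2) (Ioo (0:ℝ) 1) x := by
    intro x hx
    have h1x : (1:ℝ) - x ≠ 0 := by have := hx.2; intro h; linarith [hx.2]
    have := (hasDerivAt_id x).div ((hasDerivAt_const x (1:ℝ)).sub (hasDerivAt_id x)) h1x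
    exact (this.congr_deriv (by simp)).hasDerivWithinAt
  have hinj : InjOn (fun x : ℝ => x / (1 - x)) (Ioo (0:ℝ) 1) := by
    intro a ha b hb h
    have h1a : (1:ℝ) - a ≠ 0 := by have := ha.2; intro hc; linarith
    have h1b : (1:ℝ) - b ≠ 0 := by have := hb.2; intro hc; linarith
    field_simp at h
    linarith
  rw [← himg, integral_image_eq_integral_abs_deriv_smul measurableSet_Ioo hderiv hinj]
  refine setIntegral_congr_fun measurableSet_Ioo fun x hx => ?_
  obtain ⟨hx0, hx1⟩ := hx
  have h1x : (0:ℝ) < 1 - x := by linarith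
  have harg : ((1 - x : ℝ) : ℂ).arg ≠ Real.pi := by
    rw [Complex.arg_ofReal_of_nonneg h1x.le]
    exact Real.pi_ne_zero.symm
  have hratio : ((x / (1 - x) : ℝ) : ℂ) ^ (s - 1)
      = (x : ℂ) ^ (s - 1) * ((1 - x : ℝ) : ℂ) ^ (-(s - 1)) := by
    rw [div_eq_mul_inv, Complex.ofReal_mul,
      Complex.mul_cpow_ofReal_nonneg hx0.le (by positivity),
      Complex.ofReal_inv, Complex.inv_cpow _ _ harg, ← Complex.cpow_neg]
  have hden : 1 + ((x / (1 - x) : ℝ) : ℂ) = ((1 - x : ℝ) : ℂ)⁻¹ := by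
    rw [← Complex.ofReal_inv, ← Complex.ofReal_one, ← Complex.ofReal_add]
    congr 1
    field_simp
    ring
  have habs : |1 / (1 - x) ^ 2| = 1 / (1 - x) ^ 2 := abs_of_pos (by positivity)
  rw [hratio, hden, habs]
  have hne : ((1 - x : ℝ) : ℂ) ≠ 0 := by
    exact_mod_cast h1x.ne'
  have hsplit : ((1 - x : ℝ) : ℂ) ^ (-(s - 1))
      = ((1 - x : ℝ) : ℂ) ^ (-s) * ((1 - x : ℝ) : ℂ) := by
    rw [show -(s-1) = -s + 1 by ring, Complex.cpow_add _ _ hne, Complex.cpow_one]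
  rw [hsplit]
  have h2 : ((1 - x : ℝ) : ℂ) = 1 - (x : ℂ) := by push_cast; ring
  rw [← h2, Complex.real_smul, div_eq_mul_inv _ (((1 - x : ℝ):ℂ))⁻¹, inv_inv]
  have hkey : ((1 / (1 - x) ^ 2 : ℝ) : ℂ) * (((1 - x : ℝ) : ℂ) * ((1 - x : ℝ) : ℂ)) = 1 := by
    have : (1 / (1 - x) ^ 2) * ((1 - x) * (1 - x)) = (1:ℝ) := by field_simp
    exact_mod_cast this
  linear_combination ((x:ℂ) ^ (s - 1) * ((1 - x : ℝ) : ℂ) ^ (-s)) * hkey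

lemma aux_mellin_value (s : ℂ) (hs0 : 0 < s.re) (hs1 : s.re < 1) :
    ∫ t in Ioi (0:ℝ), (t : ℂ) ^ (s - 1) / (1 + (t : ℂ))
      = (Real.pi : ℂ) / Complex.sin (Real.pi * s) := by
  rw [aux_beta_to_mellin]
  have hbeta : Complex.betaIntegral s (1 - s)
      = ∫ x in Ioo (0:ℝ) 1, (x : ℂ) ^ (s - 1) * (1 - (x : ℂ)) ^ (-s) := by
    rw [Complex.betaIntegral, intervalIntegral.integral_of_le zero_le_one,
      ← integral_Ioc_eq_integral_Ioo]
    simp only [show (1:ℂ) - s - 1 = -s by ring]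
  rw [← hbeta]
  have h1 : Complex.Gamma s * Complex.Gamma (1 - s)
      = Complex.Gamma (s + (1 - s)) * Complex.betaIntegral s (1 - s) :=
    Complex.Gamma_mul_Gamma_eq_betaIntegral hs0 (by simp [Complex.sub_re]; linarith)
  rw [show s + (1 - s) = 1 by ring, Complex.Gamma_one, one_mul] at h1
  rw [← h1, Complex.Gamma_mul_Gamma_one_sub]

theorem stmt16 (ξ : ℝ) :
    ∫ x : ℝ, ((2 / (Real.exp (Real.pi * x) + Real.exp (-(Real.pi * x))) : ℝ) : ℂ) *
        Complex.exp (-2 * Real.pi * Complex.I * ξ * x) =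
      ((2 / (Real.exp (Real.pi * ξ) + Real.exp (-(Real.pi * ξ))) : ℝ) : ℂ) := by
  set s : ℂ := 1 / 2 - Complex.I * ξ with hs
  -- substitution t = exp (2πx)
  have himg : (fun x : ℝ => Real.exp (2 * Real.pi * x)) '' univ = Ioi (0:ℝ) := by
    ext t
    simp only [image_univ, mem_range, mem_Ioi]
    constructor
    · rintro ⟨x, rfl⟩; exact Real.exp_pos _
    · intro ht
      exact ⟨Real.log t / (2 * Real.pi), by
        rw [mul_div_cancel₀ _ (by positivity), Real.exp_log ht]⟩
  have hderiv : ∀ x ∈ (univ : Set ℝ),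
      HasDerivWithinAt (fun x : ℝ => Real.exp (2 * Real.pi * x))
        (2 * Real.pi * Real.exp (2 * Real.pi * x)) univ x := by
    intro x _
    have h := (((hasDerivAt_id x).const_mul (2 * Real.pi)).exp)
    simp only [id_eq, mul_one] at h
    exact (h.congr_deriv (by ring)).hasDerivWithinAt
  have hinj : InjOn (fun x : ℝ => Real.exp (2 * Real.pi * x)) univ := by
    intro a _ b _ h
    have h' := Real.exp_injective h
    exact mul_left_cancel₀ (by positivity : (2 * Real.pi) ≠ 0) h'
  have key := aux_mellin_value s (by norm_num [hs, Complex.sub_re, Complex.mul_re])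
    (by norm_num [hs, Complex.sub_re, Complex.mul_re])
  rw [← himg, integral_image_eq_integral_abs_deriv_smul MeasurableSet.univ hderiv hinj,
    Measure.restrict_univ] at key
  have hcongr : ∀ x : ℝ,
      |2 * Real.pi * Real.exp (2 * Real.pi * x)| •
        (((Real.exp (2 * Real.pi * x) : ℝ) : ℂ) ^ (s - 1) /
          (1 + ((Real.exp (2 * Real.pi * x) : ℝ) : ℂ)))
      = (Real.pi : ℂ) *
        (((2 / (Real.exp (Real.pi * x) + Real.exp (-(Real.pi * x))) : ℝ) : ℂ) *
          Complex.exp (-2 * Real.pi * Complex.I * ξ * x)) := by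
    intro x
    have habs : |2 * Real.pi * Real.exp (2 * Real.pi * x)|
        = 2 * Real.pi * Real.exp (2 * Real.pi * x) := abs_of_pos (by positivity)
    rw [habs, aux_cpow_exp]
    have hexp : ((2 * Real.pi * x : ℝ) : ℂ) * (s - 1)
        = (-(Real.pi * x) : ℝ) + (-2 * Real.pi * Complex.I * ξ * x) := by
      rw [hs]; push_cast; ring
    rw [hexp, Complex.exp_add, Complex.ofReal_exp]
    have hne : (1 : ℂ) + Complex.exp ((2 * Real.pi * x : ℝ) : ℂ) ≠ 0 := by
      rw [← Complex.ofReal_exp, ← Complex.ofReal_one, ← Complex.ofReal_add]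
      exact_mod_cast (by positivity : (0:ℝ) < 1 + Real.exp (2 * Real.pi * x)).ne'
    have hden : ((Real.exp (Real.pi * x) + Real.exp (-(Real.pi * x)) : ℝ) : ℂ) ≠ 0 := by
      exact_mod_cast (by positivity : (0:ℝ) < Real.exp (Real.pi * x) + Real.exp (-(Real.pi * x))).ne'
    rw [Complex.real_smul]
    push_cast
    have e1 : Complex.exp (2 * (Real.pi : ℂ) * x) = Complex.exp ((Real.pi : ℂ) * x) ^ 2 := by
      rw [sq, ← Complex.exp_add]; ring_nf
    have e2 : Complex.exp (-((Real.pi : ℂ) * x)) = (Complex.exp ((Real.pi : ℂ) * x))⁻¹ :=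
      Complex.exp_neg _
    rw [e1, e2]
    have hE : Complex.exp ((Real.pi : ℂ) * x) ≠ 0 := Complex.exp_ne_zero _
    have h1E : (1 : ℂ) + Complex.exp ((Real.pi : ℂ) * x) ^ 2 ≠ 0 := by
      rw [← e1, show (2 * (Real.pi:ℂ) * x) = ((2 * Real.pi * x : ℝ) : ℂ) by push_cast; ring,
        ← Complex.ofReal_exp, ← Complex.ofReal_one, ← Complex.ofReal_add]
      exact_mod_cast (by positivity : (0:ℝ) < 1 + Real.exp (2 * Real.pi * x)).ne'
    have hEE : Complex.exp ((Real.pi : ℂ) * x) + (Complex.exp ((Real.pi : ℂ) * x))⁻¹ ≠ 0 := by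
      have : Complex.exp ((Real.pi : ℂ) * x) + (Complex.exp ((Real.pi : ℂ) * x))⁻¹
          = (1 + Complex.exp ((Real.pi : ℂ) * x) ^ 2) * (Complex.exp ((Real.pi : ℂ) * x))⁻¹ := by
        field_simp; ring
      rw [this]
      exact mul_ne_zero h1E (inv_ne_zero hE)
    field_simp [hE, h1E, hEE]
    have hu : (1 + Complex.exp ((Real.pi:ℂ) * x) ^ 2) *
        (1 + Complex.exp ((Real.pi:ℂ) * x) ^ 2)⁻¹ = 1 := mul_inv_cancel₀ h1E
    rw [add_comm _ (1:ℂ), div_self h1E]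
  rw [integral_congr_ae (Filter.Eventually.of_forall hcongr), integral_const_mul] at key
  -- Now key : π * LHS = π / sin (π s)
  have hsin : Complex.sin ((Real.pi : ℂ) * s)
      = ((Real.exp (Real.pi * ξ) + Real.exp (-(Real.pi * ξ)) : ℝ) : ℂ) / 2 := by
    rw [hs, show (Real.pi : ℂ) * (1 / 2 - Complex.I * ξ)
        = Real.pi / 2 - (Real.pi * ξ : ℝ) * Complex.I by push_cast; ring,
      Complex.sin_pi_div_two_sub, Complex.cos_mul_I, ← Complex.ofReal_cosh, Real.cosh_eq]
    push_cast [Real.exp_neg]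
    ring
  have hpi : (Real.pi : ℂ) ≠ 0 := by exact_mod_cast Real.pi_ne_zero
  have hden : ((Real.exp (Real.pi * ξ) + Real.exp (-(Real.pi * ξ)) : ℝ) : ℂ) ≠ 0 := by
    exact_mod_cast (by positivity : (0:ℝ) < Real.exp (Real.pi * ξ) + Real.exp (-(Real.pi * ξ))).ne'
  rw [hsin] at key
  have h2 : (Real.pi : ℂ) /
      (((Real.exp (Real.pi * ξ) + Real.exp (-(Real.pi * ξ)) : ℝ) : ℂ) / 2)
      = (Real.pi : ℂ) *
        ((2 / (Real.exp (Real.pi * ξ) + Real.exp (-(Real.pi * ξ))) : ℝ) : ℂ) := by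
    push_cast
    field_simp
  rw [h2] at key
  exact mul_left_cancel₀ hpi key
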